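/- Monotonicity of stick percolation in the seed intensity: fix a probability measure μ on ℝ with μ((0,∞)) = 1, and for each intensity λ > 0 let P_λ(E) denote the probability of the percolation event in the stick percolation model with intensity λ and length distribution μ. If 0 < λ ≤ λ′ and P_λ(E) = 1, then P_{λ′}(E) = 1. -/

import Mathlib

open MeasureTheory ProbabilityTheory

open Real Set
open scoped ENNReal


lemma expMeasure_Iic {r : ℝ} (hr : 0 < r) (x : ℝ) :
    expMeasure r (Set.Iic x) =
      ENNReal.ofReal (if 0 ≤ x then 1 - Real.exp (-(r * x)) else 0) := by
  have h1 : expMeasure r (Set.Iic x) = ∫⁻ y in Set.Iic x, exponentialPDF r y := by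
    rw [expMeasure, gammaMeasure, withDensity_apply _ measurableSet_Iic]
    rfl
  rw [h1, lintegral_exponentialPDF_eq_antiDeriv hr x]

lemma expMeasure_map_mul {r r' : ℝ} (hr : 0 < r) (hr' : 0 < r') :
    (expMeasure r).map (fun x => (r / r') * x) = expMeasure r' := by
  have hc : 0 < r / r' := div_pos hr hr'
  have := isProbabilityMeasure_expMeasure hr
  have := isProbabilityMeasure_expMeasure hr'
  refine Measure.ext_of_Iic _ _ (fun a => ?_)
  rw [Measure.map_apply (by fun_prop) measurableSet_Iic]
  have hp : (fun x => (r / r') * x) ⁻¹' (Set.Iic a) = Set.Iic (a / (r / r')) := by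
    ext x
    simp [Set.mem_Iic, le_div_iff₀ hc, mul_comm]
  rw [hp, expMeasure_Iic hr, expMeasure_Iic hr']
  have h2 : 0 ≤ a / (r / r') ↔ 0 ≤ a := by
    constructor
    · intro h; nlinarith [mul_le_mul_of_nonneg_right h (le_of_lt hc), div_mul_cancel₀ a hc.ne']
    · intro h; positivity
  have h3 : r * (a / (r / r')) = r' * a := by field_simp
  rw [h3]; congr 1; simp only [h2]


lemma map_restrict_eq_pi {ι : Type*} {Ω : Type*} [MeasurableSpace Ω]
    (P : Measure Ω) [IsProbabilityMeasure P] (Y : ι → Ω → ℝ)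
    (hm : ∀ i, Measurable (Y i))
    (hi : iIndepFun Y P) (s : Finset ι) :
    P.map (fun ω (i : s) => Y i ω) = Measure.pi (fun i : s => P.map (Y i)) := by
  have hp : ∀ i : s, IsProbabilityMeasure (P.map (Y i)) :=
    fun i => Measure.isProbabilityMeasure_map (hm i).aemeasurable
  refine (Measure.pi_eq fun t ht => ?_).symm
  classical
  set t' : ι → Set ℝ := fun j => if h : j ∈ s then t ⟨j, h⟩ else Set.univ with ht'
  have hmeas : Measurable (fun ω (i : s) => Y i ω) := measurable_pi_lambda _ fun i => hm i
  rw [Measure.map_apply hmeas (MeasurableSet.univ_pi ht)]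
  have hpre : (fun ω (i : s) => Y i ω) ⁻¹' (Set.univ.pi t) = ⋂ j ∈ s, Y j ⁻¹' t' j := by
    ext ω
    simp only [Set.mem_preimage, Set.mem_univ_pi, Set.mem_iInter, ht', Set.mem_preimage]
    constructor
    · intro h j hj; simp only [dif_pos hj]; exact h ⟨j, hj⟩
    · intro h i; have := h i i.2; simpa [dif_pos i.2] using this
  rw [hpre, hi.measure_inter_preimage_eq_mul s
      (fun j hj => by simp only [ht', dif_pos hj]; exact ht ⟨j, hj⟩)]
  rw [← Finset.prod_attach s (fun j => P (Y j ⁻¹' t' j))]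
  have : (Finset.univ : Finset s) = s.attach := rfl
  rw [show (∏ i : s, (P.map (Y i)) (t i)) = ∏ i ∈ s.attach, (P.map (Y i)) (t i) from rfl]
  refine Finset.prod_congr rfl fun i _ => ?_
  rw [Measure.map_apply (hm i) (ht i)]
  congr 1
  simp [ht', dif_pos i.2]

lemma map_cylinder_eq_pi {ι : Type*} {Ω : Type*} [MeasurableSpace Ω]
    (P : Measure Ω) [IsProbabilityMeasure P] (Y : ι → Ω → ℝ)
    (hm : ∀ i, Measurable (Y i))
    (hi : iIndepFun Y P) (s : Finset ι)
    (S : Set ((i : s) → ℝ)) (hS : MeasurableSet S) :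
    P.map (fun ω i => Y i ω) (cylinder s S)
      = Measure.pi (fun i : s => P.map (Y i)) S := by
  rw [Measure.map_apply (measurable_pi_lambda _ hm) (hS.cylinder s)]
  have : (fun ω i => Y i ω) ⁻¹' cylinder s S
      = (fun ω (i : s) => Y i ω) ⁻¹' S := rfl
  rw [this, ← Measure.map_apply (measurable_pi_lambda _ fun i : s => hm i) hS,
    map_restrict_eq_pi P Y hm hi]

lemma joint_law_eq {ι : Type*} {Ω₁ Ω₂ : Type*} [MeasurableSpace Ω₁] [MeasurableSpace Ω₂]
    (P₁ : Measure Ω₁) (P₂ : Measure Ω₂) [IsProbabilityMeasure P₁] [IsProbabilityMeasure P₂]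
    (Y₁ : ι → Ω₁ → ℝ) (Y₂ : ι → Ω₂ → ℝ)
    (hm₁ : ∀ i, Measurable (Y₁ i)) (hm₂ : ∀ i, Measurable (Y₂ i))
    (hi₁ : iIndepFun Y₁ P₁)
    (hi₂ : iIndepFun Y₂ P₂)
    (hlaw : ∀ i, P₁.map (Y₁ i) = P₂.map (Y₂ i)) :
    P₁.map (fun ω i => Y₁ i ω) = P₂.map (fun ω i => Y₂ i ω) := by
  have hmeas₁ : Measurable (fun ω i => Y₁ i ω) := measurable_pi_lambda _ hm₁
  have hmeas₂ : Measurable (fun ω i => Y₂ i ω) := measurable_pi_lambda _ hm₂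
  have hp₁ : IsProbabilityMeasure (P₁.map (fun ω i => Y₁ i ω)) :=
    Measure.isProbabilityMeasure_map hmeas₁.aemeasurable
  have hp₂ : IsProbabilityMeasure (P₂.map (fun ω i => Y₂ i ω)) :=
    Measure.isProbabilityMeasure_map hmeas₂.aemeasurable
  refine ext_of_generate_finite (measurableCylinders fun _ : ι => ℝ)
    generateFrom_measurableCylinders.symm isPiSystem_measurableCylinders
    (fun u hu => ?_) (by simp)
  obtain ⟨s, S, hS, rfl⟩ := (mem_measurableCylinders _).1 hu
  have k1 := map_cylinder_eq_pi P₁ Y₁ hm₁ hi₁ s S hS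
  have k2 := map_cylinder_eq_pi P₂ Y₂ hm₂ hi₂ s S hS
  rw [k1, k2]
  have : (fun i : s => P₁.map (Y₁ i)) = fun i : s => P₂.map (Y₂ i) :=
    funext fun i => hlaw i
  rw [this]


noncomputable def seedOf (f : ℕ ⊕ ℕ → ℝ) (n : ℕ) : ℝ :=
  ∑ i ∈ Finset.range (n + 1), f (.inl i)

def PercCfg (f : ℕ ⊕ ℕ → ℝ) : Prop :=
  ∃ a : ℝ, Set.Ici a ⊆ ⋃ n : ℕ, Set.Icc (seedOf f n) (seedOf f n + f (.inr n))

def GoodSet : Set (ℕ ⊕ ℕ → ℝ) :=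
  {f | (∀ i, 0 < f (.inl i)) ∧ (∀ i, 0 < f (.inr i)) ∧
    ∀ m : ℕ, ∃ n, (m : ℝ) ≤ seedOf f n}

def QSet : Set (ℕ ⊕ ℕ → ℝ) :=
  {f | ∃ a : ℕ, ∀ q : ℚ, (a : ℝ) ≤ (q : ℝ) →
    ∃ n, seedOf f n ≤ (q : ℝ) ∧ (q : ℝ) ≤ seedOf f n + f (.inr n)}

lemma measurable_seedOf (n : ℕ) : Measurable fun f : ℕ ⊕ ℕ → ℝ => seedOf f n :=
  Finset.measurable_sum _ fun i _ => measurable_pi_apply _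

lemma measurableSet_GoodSet : MeasurableSet GoodSet := by
  have h1 : GoodSet = (⋂ i : ℕ, {f : ℕ ⊕ ℕ → ℝ | 0 < f (.inl i)}) ∩
      ((⋂ i : ℕ, {f : ℕ ⊕ ℕ → ℝ | 0 < f (.inr i)}) ∩
        ⋂ m : ℕ, ⋃ n : ℕ, {f : ℕ ⊕ ℕ → ℝ | (m : ℝ) ≤ seedOf f n}) := by
    ext f
    simp only [GoodSet, Set.mem_setOf_eq, Set.mem_inter_iff, Set.mem_iInter, Set.mem_iUnion,
      Set.mem_setOf_eq]
  rw [h1]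
  refine (MeasurableSet.iInter fun i => ?_).inter
    ((MeasurableSet.iInter fun i => ?_).inter
      (MeasurableSet.iInter fun m => MeasurableSet.iUnion fun n => ?_))
  · exact measurableSet_lt measurable_const (measurable_pi_apply _)
  · exact measurableSet_lt measurable_const (measurable_pi_apply _)
  · exact measurableSet_le measurable_const (measurable_seedOf n)

lemma measurableSet_QSet : MeasurableSet QSet := by
  have h1 : QSet = ⋃ a : ℕ, ⋂ q : ℚ, ({f : ℕ ⊕ ℕ → ℝ | (q : ℝ) < (a : ℝ)} ∪
      ⋃ n : ℕ, ({f : ℕ ⊕ ℕ → ℝ | seedOf f n ≤ (q : ℝ)} ∩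
        {f : ℕ ⊕ ℕ → ℝ | (q : ℝ) ≤ seedOf f n + f (.inr n)})) := by
    ext f
    simp only [QSet, Set.mem_setOf_eq, Set.mem_iUnion, Set.mem_iInter, Set.mem_union,
      Set.mem_inter_iff, Set.mem_setOf_eq]
    constructor
    · rintro ⟨a, ha⟩
      exact ⟨a, fun q => by
        rcases lt_or_ge (q : ℝ) (a : ℝ) with h | h
        · exact Or.inl h
        · exact Or.inr (ha q h)⟩
    · rintro ⟨a, ha⟩
      refine ⟨a, fun q hq => ?_⟩
      rcases ha q with h | h
      · exact absurd hq (not_le.2 h)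
      · exact h
  rw [h1]
  refine MeasurableSet.iUnion fun a => MeasurableSet.iInter fun q => MeasurableSet.union ?_
    (MeasurableSet.iUnion fun n => MeasurableSet.inter ?_ ?_)
  · exact measurableSet_lt measurable_const measurable_const
  · exact measurableSet_le (measurable_seedOf n) measurable_const
  · exact measurableSet_le measurable_const ((measurable_seedOf n).add (measurable_pi_apply _))

/-- On good configurations, the countable covering condition implies percolation. -/
lemma percCfg_of_mem (f : ℕ ⊕ ℕ → ℝ) (hf : f ∈ GoodSet ∩ QSet) : PercCfg f := by
  obtain ⟨⟨hX, hS, hub⟩, a, ha⟩ := hf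
  refine ⟨(a : ℝ) + 1, fun y hy => ?_⟩
  have hy' : (a : ℝ) + 1 ≤ y := hy
  set x : ℕ → ℝ := fun n => seedOf f n with hxdef
  have hmono : StrictMono x := strictMono_nat_of_lt_succ fun n => by
    have : x (n + 1) = x n + f (.inl (n + 1)) := by
      simp only [hxdef, seedOf, Finset.sum_range_succ]
    rw [this]
    linarith [hX (n + 1)]
  obtain ⟨n₀, hn₀⟩ := hub (⌈y⌉₊ + 1)
  have hyn₀ : y < x n₀ := lt_of_lt_of_le (by push_cast; linarith [Nat.le_ceil y]) hn₀
  classical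
  set g : ℕ → ℝ := fun n =>
    if x n + f (.inr n) < y then x n + f (.inr n) else (a : ℝ) with hg
  have hne : (Finset.range (n₀ + 1)).Nonempty := ⟨0, by simp⟩
  set lo : ℝ := (Finset.range (n₀ + 1)).sup' hne
    (fun n => if n < n₀ then g n else (a : ℝ)) with hlo
  have hlo_lt : lo < y := by
    rw [hlo, Finset.sup'_lt_iff]
    intro n _
    split_ifs with h1
    · rw [hg]
      dsimp only
      split_ifs with h2
      · exact h2
      · linarith
    · linarith
  have hlo_a : (a : ℝ) ≤ lo := by
    rw [hlo]
    refine le_trans ?_ (Finset.le_sup' _ (Finset.self_mem_range_succ n₀))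
    rw [if_neg (lt_irrefl n₀)]
  obtain ⟨q, hq1, hq2⟩ := exists_rat_btwn hlo_lt
  obtain ⟨n, hqn1, hqn2⟩ := ha q (le_of_lt (lt_of_le_of_lt hlo_a hq1))
  have hn_lt : n < n₀ := hmono.lt_iff_lt.mp (lt_of_le_of_lt hqn1 (hq2.trans hyn₀))
  have hkey : ¬ (x n + f (.inr n) < y) := by
    intro hcon
    have h1 : g n ≤ lo := by
      rw [hlo]
      refine le_trans ?_ (Finset.le_sup' _ (Finset.mem_range.2 (Nat.lt_succ_of_lt hn_lt)))
      rw [if_pos hn_lt]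
    rw [hg] at h1
    dsimp only at h1
    rw [if_pos hcon] at h1
    have : (q : ℝ) ≤ x n + f (.inr n) := hqn2
    linarith
  exact Set.mem_iUnion.2 ⟨n, le_trans hqn1 (hq2.le.trans (le_refl y)), not_lt.1 hkey⟩

lemma mem_QSet_of_perc (f : ℕ ⊕ ℕ → ℝ) (hp : PercCfg f) : f ∈ QSet := by
  obtain ⟨a, ha⟩ := hp
  refine ⟨⌈a⌉₊, fun q hq => ?_⟩
  have hmem : (q : ℝ) ∈ Set.Ici a := le_trans (Nat.le_ceil a) hq
  obtain ⟨n, hn⟩ := Set.mem_iUnion.1 (ha hmem)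
  exact ⟨n, hn.1, hn.2⟩

/-- The stick percolation model: i.i.d. exponential(lam) spacings `X i` between the
seeds, i.i.d. stick lengths `S i` with law `μ`, the two families being mutually
independent. -/
structure StickModel {Ω : Type} [MeasurableSpace Ω] (P : Measure Ω)
    (lam : ℝ) (μ : Measure ℝ) where
  X : ℕ → Ω → ℝ
  S : ℕ → Ω → ℝ
  measX : ∀ i, Measurable (X i)
  measS : ∀ i, Measurable (S i)
  distX : ∀ i, P.map (X i) = expMeasure lam
  distS : ∀ i, P.map (S i) = μ
  indep : iIndepFun (Sum.elim X S) P

/-- The `n`-th seed `x_n = X_0 + ⋯ + X_n`. -/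
noncomputable def StickModel.seed {Ω : Type} [MeasurableSpace Ω] {P : Measure Ω}
    {lam : ℝ} {μ : Measure ℝ} (M : StickModel P lam μ) (n : ℕ) (ω : Ω) : ℝ :=
  ∑ i ∈ Finset.range (n + 1), M.X i ω

/-- The percolation event: the union of the sticks `[x_n, x_n + S_n]` contains a
half-line `[a, ∞)`. -/
def StickModel.Percolates {Ω : Type} [MeasurableSpace Ω] {P : Measure Ω}
    {lam : ℝ} {μ : Measure ℝ} (M : StickModel P lam μ) (ω : Ω) : Prop :=
  ∃ a : ℝ, Set.Ici a ⊆ ⋃ n : ℕ, Set.Icc (M.seed n ω) (M.seed n ω + M.S n ω)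

lemma stick_good_as {Ω : Type} [MeasurableSpace Ω] {P : Measure Ω} [IsProbabilityMeasure P]
    {lam : ℝ} {μ : Measure ℝ} [IsProbabilityMeasure μ]
    (hlam : 0 < lam) (hμ : μ (Set.Ioi (0 : ℝ)) = 1) (M : StickModel P lam μ) :
    P ((fun ω j => Sum.elim M.X M.S j ω) ⁻¹' GoodSet) = 1 := by
  classical
  set Φ : Ω → (ℕ ⊕ ℕ → ℝ) := fun ω j => Sum.elim M.X M.S j ω with hΦ
  -- null events
  have hXnull : ∀ i, P (M.X i ⁻¹' Set.Iic 0) = 0 := by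
    intro i
    rw [← Measure.map_apply (M.measX i) measurableSet_Iic, M.distX i, expMeasure_Iic hlam]
    simp
  have hSnull : ∀ i, P (M.S i ⁻¹' Set.Iic 0) = 0 := by
    intro i
    rw [← Measure.map_apply (M.measS i) measurableSet_Iic, M.distS i, ← Set.compl_Ioi,
      measure_compl measurableSet_Ioi (measure_ne_top _ _), hμ, measure_univ, tsub_self]
  -- bounded-seeds events
  set B : ℕ → Set Ω := fun m =>
    (⋂ i : ℕ, M.X i ⁻¹' Set.Ioi 0) ∩
      ⋂ n : ℕ, {ω | ∑ i ∈ Finset.range (n + 1), M.X i ω ≤ (m : ℝ)} with hB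
  have hBnull : ∀ m, P (B m) = 0 := by
    intro m
    set p : ℝ≥0∞ := ENNReal.ofReal (1 - Real.exp (-(lam * m))) with hp
    have hXle : ∀ i, P (M.X i ⁻¹' Set.Iic (m : ℝ)) = p := by
      intro i
      rw [← Measure.map_apply (M.measX i) measurableSet_Iic, M.distX i, expMeasure_Iic hlam,
        if_pos (by positivity : (0:ℝ) ≤ (m:ℝ))]
    have hbound : ∀ n : ℕ, P (B m) ≤ p ^ (n + 1) := by
      intro n
      have hsub : B m ⊆ ⋂ i ∈ Finset.range (n + 1), M.X i ⁻¹' Set.Iic (m : ℝ) := by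
        rintro ω ⟨hpos, hbd⟩
        simp only [Set.mem_iInter, Set.mem_preimage, Set.mem_Iic]
        intro i hi
        have h1 : M.X i ω ≤ ∑ j ∈ Finset.range (n + 1), M.X j ω :=
          Finset.single_le_sum (f := fun j => M.X j ω)
            (fun j _ => le_of_lt (Set.mem_iInter.1 hpos j)) hi
        exact le_trans h1 (Set.mem_iInter.1 hbd n)
      have hI := M.indep.measure_inter_preimage_eq_mul
        ((Finset.range (n + 1)).map ⟨Sum.inl, Sum.inl_injective⟩)
        (sets := Sum.elim (fun _ => Set.Iic (m : ℝ)) (fun _ => Set.univ))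
        (fun j _ => by cases j with
          | inl i => exact measurableSet_Iic
          | inr i => exact MeasurableSet.univ)
      have hset : (⋂ j ∈ (Finset.range (n + 1)).map ⟨Sum.inl, Sum.inl_injective⟩,
            Sum.elim M.X M.S j ⁻¹' Sum.elim (fun _ => Set.Iic (m : ℝ)) (fun _ => Set.univ) j)
          = ⋂ i ∈ Finset.range (n + 1), M.X i ⁻¹' Set.Iic (m : ℝ) := by
        ext ω
        simp only [Set.mem_iInter, Finset.mem_map, Function.Embedding.coeFn_mk]
        constructor
        · intro h i hi
          exact h (Sum.inl i) ⟨i, hi, rfl⟩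
        · rintro h j ⟨i, hi, rfl⟩
          exact h i hi
      rw [hset] at hI
      have hprod : (∏ j ∈ (Finset.range (n + 1)).map ⟨Sum.inl, Sum.inl_injective⟩,
            P (Sum.elim M.X M.S j ⁻¹' Sum.elim (fun _ => Set.Iic (m : ℝ)) (fun _ => Set.univ) j))
          = p ^ (n + 1) := by
        rw [Finset.prod_map]
        simp only [Function.Embedding.coeFn_mk]
        have : ∀ i ∈ Finset.range (n + 1),
            P (Sum.elim M.X M.S (Sum.inl i : ℕ ⊕ ℕ) ⁻¹'
              Sum.elim (fun _ => Set.Iic (m : ℝ)) (fun _ => Set.univ) (Sum.inl i : ℕ ⊕ ℕ)) = p :=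
          fun i _ => hXle i
        rw [Finset.prod_congr rfl this, Finset.prod_const, Finset.card_range]
      rw [hprod] at hI
      exact le_trans (measure_mono hsub) (le_of_eq hI)
    have hplt : p < 1 := by
      rw [hp]
      exact ENNReal.ofReal_lt_one.2 (by linarith [Real.exp_pos (-(lam * m))])
    have htend : Filter.Tendsto (fun n : ℕ => p ^ (n + 1)) Filter.atTop (nhds 0) :=
      (ENNReal.tendsto_pow_atTop_nhds_zero_of_lt_one hplt).comp
        (Filter.tendsto_add_atTop_nat 1)
    exact le_antisymm (ge_of_tendsto' htend hbound) zero_le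
  -- combine
  have hcompl : Φ ⁻¹' GoodSetᶜ ⊆
      ((⋃ i : ℕ, M.X i ⁻¹' Set.Iic 0) ∪ (⋃ i : ℕ, M.S i ⁻¹' Set.Iic 0)) ∪ ⋃ m : ℕ, B m := by
    intro ω hω
    simp only [Set.mem_preimage, Set.mem_compl_iff, GoodSet, Set.mem_setOf_eq] at hω
    push_neg at hω
    by_cases hX : ∀ i, 0 < M.X i ω
    · by_cases hS : ∀ i, 0 < M.S i ω
      · obtain ⟨m, hm⟩ := hω hX hS
        refine Or.inr (Set.mem_iUnion.2 ⟨m, Set.mem_iInter.2 fun i => hX i, ?_⟩)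
        exact Set.mem_iInter.2 fun n => le_of_lt (hm n)
      · push_neg at hS
        obtain ⟨i, hi⟩ := hS
        exact Or.inl (Or.inr (Set.mem_iUnion.2 ⟨i, hi⟩))
    · push_neg at hX
      obtain ⟨i, hi⟩ := hX
      exact Or.inl (Or.inl (Set.mem_iUnion.2 ⟨i, hi⟩))
  have hnull : P (Φ ⁻¹' GoodSetᶜ) = 0 := by
    refine measure_mono_null hcompl ?_
    refine measure_union_null (measure_union_null ?_ ?_) ?_ <;>
      exact measure_iUnion_null (by intro i; first | exact hXnull i | exact hSnull i | exact hBnull i)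
  have hmeasΦ : Measurable Φ := measurable_pi_lambda _ (fun j => by
    cases j with
    | inl i => exact M.measX i
    | inr i => exact M.measS i)
  have hmg : MeasurableSet (Φ ⁻¹' GoodSet) := hmeasΦ measurableSet_GoodSet
  have : Φ ⁻¹' GoodSetᶜ = (Φ ⁻¹' GoodSet)ᶜ := rfl
  rw [this] at hnull
  rw [← prob_compl_eq_zero_iff hmg]
  exact hnull


/-- Monotonicity in the seed intensity: if the system with intensity `lam`
percolates with probability 1 and `lam ≤ lam'`, then the system with intensity
`lam'` (and the same length distribution) also percolates with probability 1. -/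
theorem stick_percolation_mono_intensity (μ : Measure ℝ) [IsProbabilityMeasure μ]
    (hμ : μ (Set.Ioi (0 : ℝ)) = 1) (lam lam' : ℝ) (hlam : 0 < lam)
    (hle : lam ≤ lam')
    {Ω : Type} [MeasurableSpace Ω] (P : Measure Ω) [IsProbabilityMeasure P]
    (M : StickModel P lam μ)
    {Ω' : Type} [MeasurableSpace Ω'] (P' : Measure Ω') [IsProbabilityMeasure P']
    (M' : StickModel P' lam' μ)
    (hperc : P {ω | M.Percolates ω} = 1) :
    P' {ω | M'.Percolates ω} = 1 := by
  classical
  have hlam' : 0 < lam' := lt_of_lt_of_le hlam hle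
  set c : ℝ := lam / lam' with hc
  have hc0 : 0 < c := div_pos hlam hlam'
  have hc1 : c ≤ 1 := (div_le_one hlam').2 hle
  -- the scaled model on Ω with intensity lam'
  have hindep'' : iIndepFun
      (Sum.elim (fun i ω => c * M.X i ω) M.S) P := by
    have h := M.indep.comp (Sum.elim (fun _ (x : ℝ) => c * x) (fun _ (x : ℝ) => x))
      (fun j => by cases j with
        | inl i => exact measurable_const_mul c
        | inr i => exact measurable_id)
    have heq : (fun j => Sum.elim (fun _ (x : ℝ) => c * x) (fun _ (x : ℝ) => x) j ∘
        Sum.elim M.X M.S j) = Sum.elim (fun i ω => c * M.X i ω) M.S := by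
      funext j; cases j <;> rfl
    rwa [heq] at h
  set M'' : StickModel P lam' μ :=
    { X := fun i ω => c * M.X i ω
      S := M.S
      measX := fun i => (M.measX i).const_mul c
      measS := M.measS
      distX := fun i => by
        have h1 : (fun ω => c * M.X i ω) = (fun x : ℝ => c * x) ∘ M.X i := rfl
        rw [h1, ← Measure.map_map (measurable_const_mul c) (M.measX i), M.distX i]
        exact expMeasure_map_mul hlam hlam'
      distS := M.distS
      indep := hindep'' } with hM''
  set Φ : Ω → (ℕ ⊕ ℕ → ℝ) := fun ω j => Sum.elim M''.X M''.S j ω with hΦ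
  set Φ' : Ω' → (ℕ ⊕ ℕ → ℝ) := fun ω j => Sum.elim M'.X M'.S j ω with hΦ'
  have hmeasΦ : Measurable Φ := measurable_pi_lambda _ (fun j => by
    cases j with
    | inl i => exact M''.measX i
    | inr i => exact M''.measS i)
  have hmeasΦ' : Measurable Φ' := measurable_pi_lambda _ (fun j => by
    cases j with
    | inl i => exact M'.measX i
    | inr i => exact M'.measS i)
  -- the two joint laws agree
  have hlaw : P.map Φ = P'.map Φ' := by
    refine joint_law_eq P P' (Sum.elim M''.X M''.S) (Sum.elim M'.X M'.S)
      (fun j => by cases j with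
        | inl i => exact M''.measX i
        | inr i => exact M''.measS i)
      (fun j => by cases j with
        | inl i => exact M'.measX i
        | inr i => exact M'.measS i)
      M''.indep M'.indep (fun j => ?_)
    cases j with
    | inl i => rw [show Sum.elim M''.X M''.S (Sum.inl i : ℕ ⊕ ℕ) = M''.X i from rfl,
        show Sum.elim M'.X M'.S (Sum.inl i : ℕ ⊕ ℕ) = M'.X i from rfl, M''.distX i, M'.distX i]
    | inr i => rw [show Sum.elim M''.X M''.S (Sum.inr i : ℕ ⊕ ℕ) = M''.S i from rfl,
        show Sum.elim M'.X M'.S (Sum.inr i : ℕ ⊕ ℕ) = M'.S i from rfl, M''.distS i, M'.distS i]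
  have hAmeas : MeasurableSet (GoodSet ∩ QSet) := measurableSet_GoodSet.inter measurableSet_QSet
  -- the good event for the scaled model has probability one
  have hgood : P (Φ ⁻¹' GoodSet) = 1 := stick_good_as hlam' hμ M''
  -- on the good event, percolation of M gives the covering condition for the scaled model
  have hsub : Φ ⁻¹' GoodSet ∩ {ω | M.Percolates ω} ⊆ Φ ⁻¹' (GoodSet ∩ QSet) := by
    rintro ω ⟨hg, hp⟩
    refine ⟨hg, mem_QSet_of_perc _ ?_⟩
    obtain ⟨a, ha⟩ := hp
    refine ⟨c * a, fun y hy => ?_⟩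
    have hz : a ≤ y / c := by
      rw [le_div_iff₀ hc0]
      calc a * c = c * a := mul_comm a c
        _ ≤ y := hy
    obtain ⟨n, hn⟩ := Set.mem_iUnion.1 (ha hz)
    have hn1 : M.seed n ω ≤ y / c := hn.1
    have hn2 : y / c ≤ M.seed n ω + M.S n ω := hn.2
    have hS_pos : (0 : ℝ) < M.S n ω := hg.2.1 n
    have hseed : seedOf (Φ ω) n = c * M.seed n ω := by
      simp only [hΦ, seedOf, StickModel.seed, Finset.mul_sum]
      rfl
    have hyc : c * (y / c) = y := by field_simp
    refine Set.mem_iUnion.2 ⟨n, ?_, ?_⟩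
    · rw [hseed]
      calc c * M.seed n ω ≤ c * (y / c) := by
            exact mul_le_mul_of_nonneg_left hn1 hc0.le
        _ = y := hyc
    · have h2 : y ≤ c * M.seed n ω + c * M.S n ω := by
        calc y = c * (y / c) := hyc.symm
          _ ≤ c * (M.seed n ω + M.S n ω) := mul_le_mul_of_nonneg_left hn2 hc0.le
          _ = c * M.seed n ω + c * M.S n ω := mul_add c _ _
      have h3 : c * M.S n ω ≤ M.S n ω := by nlinarith
      have h4 : Φ ω (Sum.inr n : ℕ ⊕ ℕ) = M.S n ω := rfl
      rw [hseed, h4]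
      linarith
  -- hence the covering condition holds a.s. for the scaled model
  have hkey : P (Φ ⁻¹' (GoodSet ∩ QSet)) = 1 := by
    have h1 : P {ω | M.Percolates ω} ≤
        P ({ω | M.Percolates ω} ∩ Φ ⁻¹' GoodSet) +
          P ({ω | M.Percolates ω} \ Φ ⁻¹' GoodSet) :=
      measure_le_inter_add_diff P _ _
    have h2 : P ({ω | M.Percolates ω} \ Φ ⁻¹' GoodSet) = 0 := by
      have hcpl : {ω | M.Percolates ω} \ Φ ⁻¹' GoodSet ⊆ (Φ ⁻¹' GoodSet)ᶜ :=
        fun ω hω => hω.2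
      refine measure_mono_null hcpl ?_
      rw [prob_compl_eq_zero_iff (hmeasΦ measurableSet_GoodSet)]
      exact hgood
    have h3 : (1 : ℝ≥0∞) ≤ P (Φ ⁻¹' (GoodSet ∩ QSet)) := by
      calc (1 : ℝ≥0∞) = P {ω | M.Percolates ω} := hperc.symm
        _ ≤ P ({ω | M.Percolates ω} ∩ Φ ⁻¹' GoodSet) +
            P ({ω | M.Percolates ω} \ Φ ⁻¹' GoodSet) := h1
        _ = P ({ω | M.Percolates ω} ∩ Φ ⁻¹' GoodSet) := by rw [h2, add_zero]
        _ ≤ P (Φ ⁻¹' (GoodSet ∩ QSet)) := by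
            refine measure_mono ?_
            intro ω hω
            exact hsub ⟨hω.2, hω.1⟩
    exact le_antisymm prob_le_one h3
  -- transfer to the model M' via the law equality
  have hkey' : P' (Φ' ⁻¹' (GoodSet ∩ QSet)) = 1 := by
    rw [← Measure.map_apply hmeasΦ' hAmeas, ← hlaw, Measure.map_apply hmeasΦ hAmeas]
    exact hkey
  -- conclude
  refine le_antisymm prob_le_one ?_
  calc (1 : ℝ≥0∞) = P' (Φ' ⁻¹' (GoodSet ∩ QSet)) := hkey'.symm
    _ ≤ P' {ω | M'.Percolates ω} := by
        refine measure_mono (fun ω hω => ?_)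
        have hp := percCfg_of_mem (Φ' ω) hω
        obtain ⟨a, ha⟩ := hp
        exact ⟨a, ha⟩
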